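/- Let A be an n×n real skew-symmetric matrix with characteristic polynomial x^n + a_1 x^{n-1} + ... + a_n. Then for even k, a_k = ∑ over even linear subdigraphs L covering exactly k vertices of (−1)^{|L|}·ω(L), where the sum runs only over vertex-disjoint unions of even-length cycles. -/

import Mathlib

open Matrix

namespace Stmt10

open Equiv Equiv.Perm Polynomial Finset

variable {n : ℕ}

lemma prod_perm_stable (σ : Equiv.Perm (Fin n)) (f : Fin n → ℝ) (s : Finset (Fin n))
    (hs : ∀ i ∈ s, σ i ∈ s) (hs' : ∀ i ∈ s, σ⁻¹ i ∈ s) :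
    ∏ i ∈ s, f (σ i) = ∏ i ∈ s, f i := by
  apply Finset.prod_nbij' (fun j => σ j) (fun j => σ⁻¹ j) hs hs' <;> simp

lemma coeff_charpoly (A : Matrix (Fin n) (Fin n) ℝ) (hdiag : ∀ i, A i i = 0)
    {k : ℕ} (hk : k ≤ n) :
    A.charpoly.coeff (n - k) =
      ∑ σ ∈ Finset.univ.filter (fun σ : Equiv.Perm (Fin n) => σ.support.card = k),
        (-1 : ℝ) ^ σ.cycleType.card * ∏ i ∈ σ.support, A i (σ i) := by
  have hterm : ∀ σ : Equiv.Perm (Fin n),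
      (∏ i, charmatrix A (σ i) i) =
        C ((-1 : ℝ) ^ σ.support.card * ∏ i ∈ σ.support, A (σ i) i) *
          (X : ℝ[X]) ^ (n - σ.support.card) := by
    intro σ
    rw [← Finset.prod_mul_prod_compl σ.support]
    have h1 : ∏ i ∈ σ.support, charmatrix A (σ i) i
        = C ((-1 : ℝ) ^ σ.support.card * ∏ i ∈ σ.support, A (σ i) i) := by
      rw [_root_.map_mul, map_prod, map_pow, _root_.map_neg, _root_.map_one,
        ← Finset.prod_const, ← Finset.prod_mul_distrib]
      refine Finset.prod_congr rfl fun i hi => ?_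
      rw [charmatrix_apply_ne _ _ _ (mem_support.mp hi), neg_one_mul]
    have h2 : ∏ i ∈ σ.supportᶜ, charmatrix A (σ i) i = (X : ℝ[X]) ^ (n - σ.support.card) := by
      have : ∀ i ∈ σ.supportᶜ, charmatrix A (σ i) i = (X : ℝ[X]) := by
        intro i hi
        have hfix : σ i = i := notMem_support.mp (Finset.mem_compl.mp hi)
        rw [hfix, charmatrix_apply_eq, hdiag, map_zero, sub_zero]
      rw [Finset.prod_congr rfl this, Finset.prod_const, Finset.card_compl, Fintype.card_fin]
    rw [h1, h2]
  have hcard : ∀ σ : Equiv.Perm (Fin n), σ.support.card ≤ n := fun σ => by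
    simpa using Finset.card_le_univ σ.support
  rw [Matrix.charpoly, Matrix.det_apply', Polynomial.finset_sum_coeff]
  have key : ∀ σ : Equiv.Perm (Fin n),
      ((((Equiv.Perm.sign σ : ℤ) : ℝ[X])) * ∏ i, charmatrix A (σ i) i).coeff (n - k)
        = if σ.support.card = k then
            (-1:ℝ)^σ.cycleType.card * ∏ i ∈ σ.support, A (σ i) i else 0 := by
    intro σ
    rw [hterm σ, ← Polynomial.C_eq_intCast, ← mul_assoc, ← C_mul, coeff_C_mul,
      coeff_X_pow]
    have hiff : n - k = n - σ.support.card ↔ σ.support.card = k := by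
      have := hcard σ; omega
    by_cases h : σ.support.card = k
    · rw [if_pos (hiff.mpr h), if_pos h, mul_one]
      have hsign : ((Equiv.Perm.sign σ : ℤ) : ℝ)
          = (-1 : ℝ) ^ (k + σ.cycleType.card) := by
        rw [Equiv.Perm.sign_of_cycleType, Equiv.Perm.sum_cycleType, h]
        push_cast
        ring
      rw [hsign, h]
      have : (-1:ℝ)^(k + Multiset.card σ.cycleType) * (-1:ℝ)^k
          = (-1:ℝ)^(Multiset.card σ.cycleType) := by
        rw [pow_add, mul_right_comm, ← pow_add, ← two_mul, pow_mul]
        norm_num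
      rw [← mul_assoc, this]
    · rw [if_neg (fun hh => h (hiff.mp hh)), if_neg h, mul_zero]
  simp only [key]
  rw [← Finset.sum_filter]
  apply Finset.sum_equiv (Equiv.inv (Equiv.Perm (Fin n)))
  · intro σ
    simp [Equiv.Perm.support_inv]
  · intro σ hσ
    simp only [Equiv.inv_apply, Equiv.Perm.cycleType_inv, Equiv.Perm.support_inv]
    congr 1
    have := prod_perm_stable σ (fun j => A j (σ⁻¹ j)) σ.support
      (fun i hi => Equiv.Perm.apply_mem_support.mpr hi)
      (fun i hi => by
        rw [← Equiv.Perm.support_inv σ] at hi ⊢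
        exact Equiv.Perm.apply_mem_support.mpr hi)
    simp only [show ∀ x, σ⁻¹ (σ x) = x from fun x => by simp] at this
    exact this


def oddSet (σ : Equiv.Perm (Fin n)) : Finset (Fin n) :=
  σ.support.filter (fun i => ¬ Even ((σ.cycleOf i).support.card))

noncomputable def pflip (σ : Equiv.Perm (Fin n)) : Equiv.Perm (Fin n) :=
  if h : (oddSet σ).Nonempty then σ * ((σ.cycleOf ((oddSet σ).min' h))⁻¹) ^ 2 else σ

lemma pflip_spec (σ : Equiv.Perm (Fin n)) (h : (oddSet σ).Nonempty)
    (A : Matrix (Fin n) (Fin n) ℝ) (hA : ∀ i j, A j i = - A i j) :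
    (pflip σ).support = σ.support ∧ (pflip σ).cycleType = σ.cycleType ∧
    pflip σ ≠ σ ∧ pflip (pflip σ) = σ ∧
    (∏ i ∈ σ.support, A i (pflip σ i)) = - ∏ i ∈ σ.support, A i (σ i) := by
  classical
  set a := (oddSet σ).min' h with ha_def
  have haodd : a ∈ oddSet σ := (oddSet σ).min'_mem h
  rw [oddSet, Finset.mem_filter] at haodd
  obtain ⟨hasupp, hodd⟩ := haodd
  set c := σ.cycleOf a with hc_def
  have hcf : c ∈ σ.cycleFactorsFinset := cycleOf_mem_cycleFactorsFinset_iff.mpr hasupp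
  have hcyc : c.IsCycle := (mem_cycleFactorsFinset_iff.mp hcf).1
  have hac : a ∈ c.support := by
    rw [Equiv.Perm.mem_support, hc_def, cycleOf_apply_self]
    exact Equiv.Perm.mem_support.mp hasupp
  set d := σ * c⁻¹ with hd_def
  have hdc : Equiv.Perm.Disjoint d c := disjoint_mul_inv_of_mem_cycleFactorsFinset hcf
  have hσ_dc : σ = d * c := by rw [hd_def]; group
  have hdc' : Equiv.Perm.Disjoint d c⁻¹ := fun x => (hdc x).imp id
    (fun hx => by simpa using (congrArg (⇑c⁻¹) hx).symm)
  have hflip : pflip σ = d * c⁻¹ := by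
    rw [pflip, dif_pos h, ← ha_def, ← hc_def, hσ_dc]
    group
  have hsupp_σ : σ.support = d.support ∪ c.support := by
    rw [hσ_dc, hdc.support_mul]
  have hsupp_τ : (pflip σ).support = σ.support := by
    rw [hflip, hdc'.support_mul, Equiv.Perm.support_inv, hsupp_σ]
  have hct : (pflip σ).cycleType = σ.cycleType := by
    rw [hflip, hdc'.cycleType_mul, hσ_dc, hdc.cycleType_mul, hcyc.inv.cycleType, hcyc.cycleType,
      Equiv.Perm.support_inv]
  have hcard3 : 3 ≤ c.support.card := by
    have h2 := hcyc.two_le_card_support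
    have h3 := Nat.odd_iff.mp (Nat.not_even_iff_odd.mp hodd)
    omega
  have hne : pflip σ ≠ σ := by
    intro he
    have h1 : σ * (c⁻¹)^2 = σ := by
      have h1' := he
      rw [pflip, dif_pos h, ← ha_def, ← hc_def] at h1'
      exact h1'
    have h2 : c ^ 2 = 1 := by
      have h3 : (c⁻¹)^2 = 1 := by
        calc (c⁻¹)^2 = σ⁻¹ * (σ * (c⁻¹)^2) := by group
        _ = σ⁻¹ * σ := by rw [h1]
        _ = 1 := by group
      calc c^2 = ((c⁻¹)^2)⁻¹ := by group
      _ = 1 := by rw [h3, inv_one]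
    have h4 : orderOf c ∣ 2 := orderOf_dvd_of_pow_eq_one h2
    rw [hcyc.orderOf] at h4
    have := Nat.le_of_dvd (by norm_num) h4
    omega
  have hd_fix : ∀ i ∈ c.support, d i = i := fun i hi =>
    (hdc i).resolve_right (Equiv.Perm.mem_support.mp hi)
  have hcinv_fix : ∀ i ∉ c.support, c⁻¹ i = i := fun i hi => by
    have : c i = i := Equiv.Perm.notMem_support.mp hi
    simpa using (congrArg (⇑c⁻¹) this).symm
  have hcOf : ∀ i ∈ c.support, (pflip σ).cycleOf i = c⁻¹ := by
    intro i hi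
    rw [hflip, hdc'.commute.eq,
      cycleOf_mul_of_apply_right_eq_self hdc'.symm.commute i (hd_fix i hi)]
    exact hcyc.inv.cycleOf_eq (by
      rw [← Equiv.Perm.mem_support, Equiv.Perm.support_inv]; exact hi)
  have hcOfσ : ∀ i ∈ c.support, σ.cycleOf i = c := fun i hi =>
    (cycle_is_cycleOf hi hcf).symm
  have hdOf : ∀ i ∉ c.support, (pflip σ).cycleOf i = σ.cycleOf i := by
    intro i hi
    rw [hflip, cycleOf_mul_of_apply_right_eq_self hdc'.commute i (hcinv_fix i hi),
      hσ_dc, cycleOf_mul_of_apply_right_eq_self hdc.commute i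
        (Equiv.Perm.notMem_support.mp hi)]
  have hodds : oddSet (pflip σ) = oddSet σ := by
    ext i
    simp only [oddSet, Finset.mem_filter, hsupp_τ]
    by_cases hi : i ∈ c.support
    · rw [hcOf i hi, hcOfσ i hi, Equiv.Perm.support_inv]
    · rw [hdOf i hi]
  have h' : (oddSet (pflip σ)).Nonempty := by rw [hodds]; exact h
  have hmin : (oddSet (pflip σ)).min' h' = a := by
    rw [ha_def]; congr 1
  have hinv : pflip (pflip σ) = σ := by
    rw [pflip, dif_pos h', hmin, hcOf a hac, hflip, hσ_dc]
    group
  have hsuppd_c : _root_.Disjoint d.support c.support := hdc.disjoint_support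
  have happτ : ∀ i ∈ c.support, pflip σ i = c⁻¹ i := by
    intro i hi
    rw [hflip]
    have : c⁻¹ i ∈ c.support := by
      rw [← Equiv.Perm.support_inv] at hi ⊢; exact Equiv.Perm.apply_mem_support.mpr hi
    simpa [Equiv.Perm.mul_apply] using hd_fix _ this
  have happτ' : ∀ i ∈ d.support, pflip σ i = d i := by
    intro i hi
    have hic : i ∉ c.support := Finset.disjoint_left.mp hsuppd_c hi
    rw [hflip]
    simp [Equiv.Perm.mul_apply, hcinv_fix _ hic]
  have happσ : ∀ i ∈ c.support, σ i = c i := by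
    intro i hi
    have : c i ∈ c.support := Equiv.Perm.apply_mem_support.mpr hi
    rw [hσ_dc]
    simp [Equiv.Perm.mul_apply, hd_fix _ this]
  have happσ' : ∀ i ∈ d.support, σ i = d i := by
    intro i hi
    have hic : i ∉ c.support := Finset.disjoint_left.mp hsuppd_c hi
    rw [hσ_dc]
    simp [Equiv.Perm.mul_apply, Equiv.Perm.notMem_support.mp hic]
  have hrev : ∏ i ∈ c.support, A i (c⁻¹ i) = - ∏ i ∈ c.support, A i (c i) := by
    have h1 : ∏ i ∈ c.support, A i (c⁻¹ i) = ∏ i ∈ c.support, A (c i) i := by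
      have hst : ∀ i ∈ c.support, c⁻¹ i ∈ c.support := by
        intro i hi
        rw [← Equiv.Perm.support_inv] at hi ⊢
        exact Equiv.Perm.apply_mem_support.mpr hi
      have hst' : ∀ i ∈ c.support, (c⁻¹)⁻¹ i ∈ c.support := by
        intro i hi
        simpa using Equiv.Perm.apply_mem_support.mpr hi
      have := prod_perm_stable c⁻¹ (fun j => A (c j) j) c.support hst hst'
      simp only [show ∀ x, c (c⁻¹ x) = x from fun x => by simp] at this
      exact this
    rw [h1]
    calc ∏ i ∈ c.support, A (c i) i = ∏ i ∈ c.support, (-1) * A i (c i) := by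
          refine Finset.prod_congr rfl fun i _ => ?_
          rw [hA, neg_one_mul]
      _ = (-1 : ℝ) ^ c.support.card * ∏ i ∈ c.support, A i (c i) := by
          rw [Finset.prod_mul_distrib, Finset.prod_const]
      _ = - ∏ i ∈ c.support, A i (c i) := by
          rw [Odd.neg_one_pow (Nat.not_even_iff_odd.mp hodd), neg_one_mul]
  have e1 : ∏ i ∈ d.support, A i (pflip σ i) = ∏ i ∈ d.support, A i (d i) :=
    Finset.prod_congr rfl (fun i hi => by rw [happτ' i hi])
  have e2 : ∏ i ∈ c.support, A i (pflip σ i) = ∏ i ∈ c.support, A i (c⁻¹ i) :=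
    Finset.prod_congr rfl (fun i hi => by rw [happτ i hi])
  have e3 : ∏ i ∈ d.support, A i (σ i) = ∏ i ∈ d.support, A i (d i) :=
    Finset.prod_congr rfl (fun i hi => by rw [happσ' i hi])
  have e4 : ∏ i ∈ c.support, A i (σ i) = ∏ i ∈ c.support, A i (c i) :=
    Finset.prod_congr rfl (fun i hi => by rw [happσ i hi])
  have hw : (∏ i ∈ σ.support, A i (pflip σ i)) = - ∏ i ∈ σ.support, A i (σ i) := by
    rw [hsupp_σ, Finset.prod_union hsuppd_c, Finset.prod_union hsuppd_c,
      e1, e2, e3, e4, hrev]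
    ring
  exact ⟨hsupp_τ, hct, hne, hinv, hw⟩


lemma oddSet_nonempty {σ : Equiv.Perm (Fin n)}
    (hbad : ¬ ∀ m ∈ σ.cycleType, Even m) : (oddSet σ).Nonempty := by
  push_neg at hbad
  obtain ⟨m, hm, hmodd⟩ := hbad
  rw [Equiv.Perm.cycleType_def, Multiset.mem_map] at hm
  obtain ⟨f, hf, hfm⟩ := hm
  simp only [Function.comp_apply] at hfm
  rw [← Finset.mem_def] at hf
  have hfc : f.IsCycle := (mem_cycleFactorsFinset_iff.mp hf).1
  obtain ⟨x, hx⟩ := hfc.nonempty_support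
  refine ⟨x, ?_⟩
  rw [oddSet, Finset.mem_filter, ← cycle_is_cycleOf hx hf, hfm]
  refine ⟨?_, hmodd⟩
  rw [Equiv.Perm.mem_support]
  rw [← (mem_cycleFactorsFinset_iff.mp hf).2 x hx]
  exact Equiv.Perm.mem_support.mp hx

lemma sum_odd_eq_zero (A : Matrix (Fin n) (Fin n) ℝ) (hA : ∀ i j, A j i = - A i j) (k : ℕ) :
    ∑ σ ∈ Finset.univ.filter
        (fun σ : Equiv.Perm (Fin n) =>
          σ.support.card = k ∧ ¬ ∀ m ∈ σ.cycleType, Even m),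
      ((-1:ℝ) ^ σ.cycleType.card * ∏ i ∈ σ.support, A i (σ i)) = 0 := by
  classical
  have hmemNE : ∀ σ : Equiv.Perm (Fin n), σ ∈ Finset.univ.filter
      (fun σ : Equiv.Perm (Fin n) =>
        σ.support.card = k ∧ ¬ ∀ m ∈ σ.cycleType, Even m) → (oddSet σ).Nonempty := by
    intro σ hσ
    rw [Finset.mem_filter] at hσ
    exact oddSet_nonempty hσ.2.2
  apply Finset.sum_involution (fun σ _ => pflip σ)
  · intro σ hσ
    obtain ⟨hsupp, hct, -, -, hw⟩ := pflip_spec σ (hmemNE σ hσ) A hA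
    rw [hct, hsupp, hw]
    ring
  · intro σ hσ _
    exact (pflip_spec σ (hmemNE σ hσ) A hA).2.2.1
  · intro σ hσ
    obtain ⟨hsupp, hct, -, -, -⟩ := pflip_spec σ (hmemNE σ hσ) A hA
    rw [Finset.mem_filter] at hσ ⊢
    exact ⟨Finset.mem_univ _, by rw [hsupp, hct]; exact hσ.2⟩
  · intro σ hσ
    exact (pflip_spec σ (hmemNE σ hσ) A hA).2.2.2.1

end Stmt10

/- Statement 10: for a real skew-symmetric matrix A and even k, the coefficient a_k of the
characteristic polynomial is the sum over even linear subdigraphs covering exactly k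
vertices (permutations with support of size k all of whose cycles have even length) of
(-1)^(number of cycles) times the weight. -/
theorem stmt_10 (n : ℕ) (A : Matrix (Fin n) (Fin n) ℝ) (hskew : Aᵀ = -A) :
    ∀ k ≤ n, Even k → A.charpoly.coeff (n - k) =
      ∑ σ ∈ Finset.univ.filter
          (fun σ : Equiv.Perm (Fin n) => σ.support.card = k ∧ ∀ c ∈ σ.cycleType, Even c),
        (-1 : ℝ) ^ σ.cycleType.card * ∏ i ∈ σ.support, A i (σ i) := by
  intro k hk _
  have hA : ∀ i j, A j i = - A i j := by
    intro i j
    have := congrFun (congrFun hskew i) j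
    simpa [Matrix.transpose_apply, Matrix.neg_apply] using this
  have hdiag : ∀ i, A i i = 0 := fun i => by have := hA i i; linarith
  rw [Stmt10.coeff_charpoly A hdiag hk,
    ← Finset.sum_filter_add_sum_filter_not
      (Finset.univ.filter (fun σ : Equiv.Perm (Fin n) => σ.support.card = k))
      (fun σ => ∀ m ∈ σ.cycleType, Even m), Finset.filter_filter, Finset.filter_filter,
    Stmt10.sum_odd_eq_zero A hA k, add_zero]
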